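/- arXiv:0912.4988 — 4 statements merged into one kernel-verified Lean document; each statement's English description precedes it below -/
import Mathlib

section
/- Let A ∈ ℝ^{n×N} and let W_1,…,W_N be subspaces of ℝ^M. Then every block coefficient vector c = (c_1,…,c_N) with ‖c‖_{2,0} ≤ k is the unique solution of problem (P1) with data Y = A·U(c) if and only if the pair (A,(W_j)_{j=1}^N) satisfies the fusion null space property of order k. -/
open scoped BigOperators
open Matrix

/-- Euclidean norm of a finite-dimensional real vector. -/
noncomputable def norm2 {ι : Type*} [Fintype ι] (v : ι → ℝ) : ℝ :=
  Real.sqrt (∑ i, v i ^ 2)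

/-- Mixed ℓ₂,₁ norm of a block coefficient vector. -/
noncomputable def l21 {N : ℕ} {m : Fin N → ℕ} (c : ∀ j, Fin (m j) → ℝ) : ℝ :=
  ∑ j, norm2 (c j)

open Classical in
/-- Mixed ℓ₂,₀ "norm": number of nonzero blocks. -/
noncomputable def l20 {N : ℕ} {m : Fin N → ℕ} (c : ∀ j, Fin (m j) → ℝ) : ℕ :=
  (Finset.univ.filter fun j => c j ≠ 0).card

/-- The matrix U(c) whose j-th row is (U_j c_j)ᵀ. -/
noncomputable def Ucmat {N M : ℕ} {m : Fin N → ℕ}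
    (U : ∀ j, Matrix (Fin M) (Fin (m j)) ℝ)
    (c : ∀ j, Fin (m j) → ℝ) : Matrix (Fin N) (Fin M) ℝ :=
  Matrix.of fun j i => (U j).mulVec (c j) i

lemma norm2_eq {ι : Type*} [Fintype ι] (v : ι → ℝ) :
    norm2 v = ‖(WithLp.equiv 2 (ι → ℝ)).symm v‖ := by
  rw [EuclideanSpace.norm_eq]
  simp [norm2, sq_abs]

lemma norm2_nonneg {ι : Type*} [Fintype ι] (v : ι → ℝ) : 0 ≤ norm2 v :=
  Real.sqrt_nonneg _

lemma norm2_zero {ι : Type*} [Fintype ι] : norm2 (0 : ι → ℝ) = 0 := by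
  simp [norm2]

lemma norm2_neg {ι : Type*} [Fintype ι] (v : ι → ℝ) : norm2 (-v) = norm2 v := by
  simp [norm2]

lemma norm2_add_le {ι : Type*} [Fintype ι] (a b : ι → ℝ) :
    norm2 (a + b) ≤ norm2 a + norm2 b := by
  rw [norm2_eq, norm2_eq, norm2_eq]
  exact norm_add_le ((WithLp.equiv 2 (ι → ℝ)).symm a) ((WithLp.equiv 2 (ι → ℝ)).symm b)

lemma Ucmat_sub {N M : ℕ} {m : Fin N → ℕ}
    (U : ∀ j, Matrix (Fin M) (Fin (m j)) ℝ) (c c' : ∀ j, Fin (m j) → ℝ) :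
    Ucmat U (c - c') = Ucmat U c - Ucmat U c' := by
  ext j i
  simp [Ucmat, Matrix.mulVec_sub]

/-- Every k-block-sparse c is the unique (P1) solution with data Y = A·U(c)
iff (A,(W_j)) satisfies the fusion null space property of order k. -/
theorem stmt0 {n N M : ℕ} {m : Fin N → ℕ} (k : ℕ)
    (A : Matrix (Fin n) (Fin N) ℝ)
    (U : ∀ j, Matrix (Fin M) (Fin (m j)) ℝ)
    (hU : ∀ j, (U j)ᵀ * U j = 1) :
    (∀ c : (∀ j, Fin (m j) → ℝ), l20 c ≤ k →
      ∀ c' : (∀ j, Fin (m j) → ℝ),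
        A * Ucmat U c' = A * Ucmat U c → c' ≠ c → l21 c < l21 c')
    ↔
    (∀ h : (∀ j, Fin (m j) → ℝ), h ≠ 0 → A * Ucmat U h = 0 →
      ∀ S : Finset (Fin N), S.card ≤ k →
        ∑ j ∈ S, norm2 (h j) < (1 / 2 : ℝ) * ∑ j, norm2 (h j)) := by
  classical
  constructor
  · -- uniqueness → NSP
    intro hP1 h hne hker S hS
    set c : ∀ j, Fin (m j) → ℝ := fun j => if j ∈ S then h j else 0 with hc
    set c' : ∀ j, Fin (m j) → ℝ := fun j => if j ∈ S then 0 else -(h j) with hc'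
    have hsub : c - c' = h := by
      funext j
      by_cases hj : j ∈ S <;> simp [hc, hc', hj]
    have hAc : A * Ucmat U c' = A * Ucmat U c := by
      have h1 : A * Ucmat U c - A * Ucmat U c' = 0 := by
        rw [← Matrix.mul_sub, ← Ucmat_sub, hsub, hker]
      exact (sub_eq_zero.mp h1).symm
    have hcard : l20 c ≤ k := by
      refine le_trans ?_ hS
      unfold l20
      apply Finset.card_le_card
      intro j hj
      simp only [Finset.mem_filter] at hj
      by_contra hjS
      exact hj.2 (by simp [hc, hjS])
    have hcc' : c' ≠ c := by
      intro heq
      apply hne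
      funext j
      have : c j - c' j = h j := congrFun hsub j
      rw [heq] at this
      simpa using this.symm
    have hlt := hP1 c hcard c' hAc hcc'
    have e1 : l21 c = ∑ j ∈ S, norm2 (h j) := by
      unfold l21
      rw [← Finset.sum_filter_add_sum_filter_not Finset.univ (· ∈ S)]
      have : ∀ j ∈ Finset.univ.filter (· ∉ S), norm2 (c j) = 0 := by
        intro j hj
        simp only [Finset.mem_filter] at hj
        simp [hc, hj.2, norm2_zero]
      rw [Finset.sum_eq_zero this, add_zero]
      rw [Finset.filter_mem_eq_inter, Finset.univ_inter]
      exact Finset.sum_congr rfl fun j hj => by simp [hc, hj]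
    have e2 : l21 c' = ∑ j ∈ Sᶜ, norm2 (h j) := by
      unfold l21
      rw [← Finset.sum_add_sum_compl S]
      have : ∑ j ∈ S, norm2 (c' j) = 0 :=
        Finset.sum_eq_zero fun j hj => by simp [hc', hj, norm2_zero]
      rw [this, zero_add]
      refine Finset.sum_congr rfl fun j hj => ?_
      rw [Finset.mem_compl] at hj
      simp [hc', hj, norm2_neg]
    have e3 : ∑ j ∈ S, norm2 (h j) + ∑ j ∈ Sᶜ, norm2 (h j) = ∑ j, norm2 (h j) :=
      Finset.sum_add_sum_compl S _
    rw [e1, e2] at hlt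
    linarith
  · -- NSP → uniqueness
    intro hNSP c hc c' hA hne
    set h : ∀ j, Fin (m j) → ℝ := c' - c with hh
    have hh0 : h ≠ 0 := fun h0 => hne (by
      funext j i
      have := congrFun (congrFun h0 j) i
      simp [hh] at this
      linarith)
    have hker : A * Ucmat U h = 0 := by
      rw [hh, Ucmat_sub, Matrix.mul_sub, hA, sub_self]
    set T := Finset.univ.filter fun j => c j ≠ 0 with hT
    have hTcard : T.card ≤ k := by
      refine le_trans (le_of_eq ?_) hc
      unfold l20
      congr 1
    have hlt := hNSP h hh0 hker T hTcard
    have e3 : ∑ j ∈ T, norm2 (h j) + ∑ j ∈ Tᶜ, norm2 (h j) = ∑ j, norm2 (h j) :=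
      Finset.sum_add_sum_compl T _
    -- pointwise bounds
    have hb1 : ∀ j ∈ T, norm2 (c j) - norm2 (h j) ≤ norm2 (c' j) := by
      intro j _
      have key := norm2_add_le (c' j) (-(h j))
      rw [norm2_neg] at key
      have : c' j + -(h j) = c j := by
        simp [hh]
      rw [this] at key
      linarith
    have hb2 : ∀ j ∈ Tᶜ, norm2 (c' j) = norm2 (h j) := by
      intro j hj
      rw [Finset.mem_compl, hT, Finset.mem_filter] at hj
      have hcj : c j = 0 := by
        by_contra hne'
        exact hj ⟨Finset.mem_univ j, hne'⟩
      have : c' j = h j := by simp [hh, hcj]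
      rw [this]
    have hz : ∀ j ∈ Tᶜ, norm2 (c j) = 0 := by
      intro j hj
      rw [Finset.mem_compl, hT, Finset.mem_filter] at hj
      have hcj : c j = 0 := by
        by_contra hne'
        exact hj ⟨Finset.mem_univ j, hne'⟩
      rw [hcj, norm2_zero]
    have eC : l21 c = ∑ j ∈ T, norm2 (c j) := by
      unfold l21
      rw [← Finset.sum_add_sum_compl T, Finset.sum_eq_zero hz, add_zero]
    have eC' : l21 c' = ∑ j ∈ T, norm2 (c' j) + ∑ j ∈ Tᶜ, norm2 (h j) := by
      unfold l21
      rw [← Finset.sum_add_sum_compl T, Finset.sum_congr rfl hb2]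
    have hs1 : ∑ j ∈ T, norm2 (c j) - ∑ j ∈ T, norm2 (h j) ≤ ∑ j ∈ T, norm2 (c' j) := by
      rw [← Finset.sum_sub_distrib]
      exact Finset.sum_le_sum hb1
    rw [eC, eC']
    linarith
end

section
/- Let A ∈ ℝ^{n×N} have unit-norm columns a_1,…,a_N, let W_1,…,W_N be subspaces of ℝ^M, and let Y ∈ ℝ^{n×M}. If c⁰ is a block coefficient vector satisfying A·U(c⁰) = Y and ‖c⁰‖_{2,0} < (1/2)(1 + μ_f^{-1}), where μ_f is the fusion coherence of (A,(W_j)), then c⁰ is the unique solution of problem (P0), i.e., every block vector c ≠ c⁰ with A·U(c) = Y satisfies ‖c⁰‖_{2,0} < ‖c‖_{2,0}. -/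
open scoped BigOperators
open Matrix

/-- The ℓ₂ → ℓ₂ operator norm of a real matrix. -/
noncomputable def opNorm {ι κ : Type*} [Fintype ι] [Fintype κ]
    (B : Matrix ι κ ℝ) : ℝ :=
  sSup {r : ℝ | ∃ v : κ → ℝ, norm2 v ≤ 1 ∧ r = norm2 (B.mulVec v)}

/-- Fusion coherence: max over j ≠ k of |⟨a_j,a_k⟩|·‖P_j P_k‖₂→₂. -/
noncomputable def fusionCoherence {n N M : ℕ} (A : Matrix (Fin n) (Fin N) ℝ)
    (P : Fin N → Matrix (Fin M) (Fin M) ℝ) : ℝ :=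
  sSup {r : ℝ | ∃ j k : Fin N, j ≠ k ∧
    r = |∑ i, A i j * A i k| * opNorm (P j * P k)}

namespace FusionAux

lemma norm2_eq_norm {ι : Type*} [Fintype ι] (v : ι → ℝ) :
    norm2 v = ‖(WithLp.equiv 2 (ι → ℝ)).symm v‖ := by
  rw [EuclideanSpace.norm_eq]
  simp only [norm2, Real.norm_eq_abs, sq_abs]
  rfl

lemma norm2_nonneg {ι : Type*} [Fintype ι] (v : ι → ℝ) : 0 ≤ norm2 v :=
  Real.sqrt_nonneg _

lemma norm2_eq_zero {ι : Type*} [Fintype ι] {v : ι → ℝ} : norm2 v = 0 ↔ v = 0 := by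
  rw [norm2_eq_norm, norm_eq_zero]
  constructor
  · intro h; have := congrArg (WithLp.equiv 2 (ι → ℝ)) h; simpa using this
  · rintro rfl; simp

lemma norm2_smul {ι : Type*} [Fintype ι] (a : ℝ) (v : ι → ℝ) :
    norm2 (a • v) = |a| * norm2 v := by
  rw [norm2_eq_norm, norm2_eq_norm, WithLp.equiv_symm_apply, WithLp.toLp_smul, norm_smul, Real.norm_eq_abs]

lemma norm2_sum_le {ι α : Type*} [Fintype ι] (s : Finset α) (f : α → ι → ℝ) :
    norm2 (∑ a ∈ s, f a) ≤ ∑ a ∈ s, norm2 (f a) := by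
  have h1 : (WithLp.equiv 2 (ι → ℝ)).symm (∑ a ∈ s, f a)
      = ∑ a ∈ s, (WithLp.equiv 2 (ι → ℝ)).symm (f a) :=
    map_sum (WithLp.linearEquiv 2 ℝ (ι → ℝ)).symm f s
  rw [norm2_eq_norm, h1]
  exact (norm_sum_le _ _).trans (le_of_eq (by simp [norm2_eq_norm]))

open scoped Matrix.Norms.L2Operator in
lemma opNorm_bddAbove {ι κ : Type*} [Fintype ι] [Fintype κ] [DecidableEq ι] [DecidableEq κ] (B : Matrix ι κ ℝ) :
    BddAbove {r : ℝ | ∃ v : κ → ℝ, norm2 v ≤ 1 ∧ r = norm2 (B.mulVec v)} := by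
  refine ⟨‖B‖, ?_⟩
  rintro r ⟨v, hv, rfl⟩
  have h := B.l2_opNorm_mulVec ((WithLp.equiv 2 (κ → ℝ)).symm v)
  have hx : ‖((WithLp.equiv 2 (κ → ℝ)).symm v : EuclideanSpace ℝ κ)‖ = norm2 v :=
    (norm2_eq_norm v).symm
  calc norm2 (B.mulVec v) ≤ ‖B‖ * norm2 v := by
        rw [norm2_eq_norm]; rw [hx] at h; exact h
    _ ≤ ‖B‖ * 1 := by
        exact mul_le_mul_of_nonneg_left hv (norm_nonneg _)
    _ = ‖B‖ := mul_one _

lemma norm2_mulVec_le {ι κ : Type*} [Fintype ι] [Fintype κ] (B : Matrix ι κ ℝ) (v : κ → ℝ) :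
    norm2 (B.mulVec v) ≤ opNorm B * norm2 v := by
  classical
  rcases eq_or_ne v 0 with rfl | hv
  · simp [Matrix.mulVec_zero, norm2_eq_zero.mpr rfl]
  · set t := norm2 v with ht
    have htpos : 0 < t := lt_of_le_of_ne (norm2_nonneg v) (fun h => hv (norm2_eq_zero.mp h.symm))
    have hu : norm2 (t⁻¹ • v) = 1 := by
      rw [norm2_smul, abs_of_pos (inv_pos.mpr htpos), ← ht, inv_mul_cancel₀ htpos.ne']
    have hmem : norm2 (B.mulVec (t⁻¹ • v)) ∈
        {r : ℝ | ∃ w : κ → ℝ, norm2 w ≤ 1 ∧ r = norm2 (B.mulVec w)} :=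
      ⟨t⁻¹ • v, le_of_eq hu, rfl⟩
    have hle : norm2 (B.mulVec (t⁻¹ • v)) ≤ opNorm B := le_csSup (opNorm_bddAbove B) hmem
    rw [Matrix.mulVec_smul, norm2_smul, abs_of_pos (inv_pos.mpr htpos)] at hle
    calc norm2 (B.mulVec v) = t * (t⁻¹ * norm2 (B.mulVec v)) := by
          field_simp
      _ ≤ t * opNorm B := mul_le_mul_of_nonneg_left hle htpos.le
      _ = opNorm B * t := mul_comm _ _

end FusionAux

namespace FusionAux

lemma fusionCoherence_ge {n N M : ℕ} (A : Matrix (Fin n) (Fin N) ℝ)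
    (P : Fin N → Matrix (Fin M) (Fin M) ℝ) {j k : Fin N} (hjk : j ≠ k) :
    |∑ i, A i j * A i k| * opNorm (P j * P k) ≤ fusionCoherence A P := by
  apply le_csSup
  · have hsub : {r : ℝ | ∃ j k : Fin N, j ≠ k ∧
        r = |∑ i, A i j * A i k| * opNorm (P j * P k)} ⊆
        Set.range (fun p : Fin N × Fin N =>
          |∑ i, A i p.1 * A i p.2| * opNorm (P p.1 * P p.2)) := by
      rintro r ⟨j, k, _, rfl⟩; exact ⟨(j, k), rfl⟩
    exact ((Set.finite_range _).subset hsub).bddAbove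
  · exact ⟨j, k, hjk, rfl⟩

end FusionAux

/-- If A·U(c⁰)=Y and ‖c⁰‖₂,₀ < (1/2)(1 + μ_f⁻¹), then c⁰ is the unique
solution of (P0). -/
theorem stmt2 {n N M : ℕ} {m : Fin N → ℕ}
    (A : Matrix (Fin n) (Fin N) ℝ)
    (hA : ∀ j, norm2 (fun i => A i j) = 1)
    (U : ∀ j, Matrix (Fin M) (Fin (m j)) ℝ)
    (hU : ∀ j, (U j)ᵀ * U j = 1)
    (Y : Matrix (Fin n) (Fin M) ℝ)
    (c0 : ∀ j, Fin (m j) → ℝ)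
    (hc0 : A * Ucmat U c0 = Y)
    (hsparse : (l20 c0 : ℝ) <
      (1 + (fusionCoherence A (fun j => U j * (U j)ᵀ))⁻¹) / 2) :
    ∀ c : (∀ j, Fin (m j) → ℝ),
      A * Ucmat U c = Y → c ≠ c0 → l20 c0 < l20 c := by
  classical
  intro c hcY hne
  set P : Fin N → Matrix (Fin M) (Fin M) ℝ := fun j => U j * (U j)ᵀ with hPdef
  set μ : ℝ := fusionCoherence A P with hμdef
  set d : ∀ j, Fin (m j) → ℝ := fun j => c j - c0 j with hddef
  set h : Fin N → (Fin M → ℝ) := fun j => (U j).mulVec (d j) with hhdef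
  -- null space property
  have hnull : ∀ i ℓ, ∑ j, A i j * h j ℓ = 0 := by
    intro i ℓ
    have hcc : A * Ucmat U c = A * Ucmat U c0 := hcY.trans hc0.symm
    have heq := congrFun (congrFun hcc i) ℓ
    simp only [Matrix.mul_apply, Ucmat, Matrix.of_apply] at heq
    have expand : ∀ j, h j ℓ = (U j).mulVec (c j) ℓ - (U j).mulVec (c0 j) ℓ := by
      intro j
      simp only [hhdef, hddef, Matrix.mulVec_sub, Pi.sub_apply]
    calc ∑ j, A i j * h j ℓ
        = ∑ j, (A i j * (U j).mulVec (c j) ℓ - A i j * (U j).mulVec (c0 j) ℓ) := by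
          refine Finset.sum_congr rfl fun j _ => ?_
          rw [expand]; ring
      _ = 0 := by rw [Finset.sum_sub_distrib, heq, sub_self]
  -- h j = 0 implies d j = 0
  have hinj : ∀ j, h j = 0 → d j = 0 := by
    intro j hj
    have h1 : (U j)ᵀ *ᵥ ((U j) *ᵥ d j) = ((U j)ᵀ * U j) *ᵥ d j :=
      Matrix.mulVec_mulVec _ _ _
    rw [hU j, Matrix.one_mulVec] at h1
    have h2 : (U j) *ᵥ d j = 0 := hj
    rw [h2, Matrix.mulVec_zero] at h1
    exact h1.symm
  have hh0 : ∀ j, d j = 0 → h j = 0 := by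
    intro j hj
    simp only [hhdef, hj, Matrix.mulVec_zero]
  set S : Finset (Fin N) := Finset.univ.filter (fun j => d j ≠ 0) with hSdef
  have hdne : ∃ j, d j ≠ 0 := by
    by_contra hcon
    push_neg at hcon
    apply hne
    funext j
    have := hcon j
    simp only [hddef] at this
    exact sub_eq_zero.mp this
  obtain ⟨j0, hj0⟩ := hdne
  have hj0S : j0 ∈ S := by simp [hSdef, hj0]
  set s : ℕ := S.card with hsdef
  set g : Fin N → Fin N → ℝ := fun k j => ∑ i, A i k * A i j with hgdef
  have hgkk : ∀ k, g k k = 1 := by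
    intro k
    have hk := hA k
    simp only [norm2] at hk
    rw [Real.sqrt_eq_one] at hk
    simp only [hgdef]
    calc ∑ i, A i k * A i k = ∑ i, A i k ^ 2 := by
          refine Finset.sum_congr rfl fun i _ => (pow_two _).symm
      _ = 1 := hk
  have hgram : ∀ k ℓ, ∑ j, g k j * h j ℓ = 0 := by
    intro k ℓ
    calc ∑ j, g k j * h j ℓ = ∑ j, ∑ i, A i k * (A i j * h j ℓ) := by
          refine Finset.sum_congr rfl fun j _ => ?_
          simp only [hgdef]
          rw [Finset.sum_mul]
          exact Finset.sum_congr rfl fun i _ => by ring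
      _ = ∑ i, ∑ j, A i k * (A i j * h j ℓ) := Finset.sum_comm
      _ = ∑ i : Fin n, A i k * ∑ j, A i j * h j ℓ := by
          refine Finset.sum_congr rfl fun i _ => (Finset.mul_sum _ _ _).symm
      _ = 0 := by
          refine Finset.sum_eq_zero fun i _ => ?_
          rw [hnull i ℓ, mul_zero]
  have hcomb : ∀ k, h k = ∑ j ∈ S.erase k, (-(g k j)) • h j := by
    intro k
    funext ℓ
    have h0 := hgram k ℓ
    have h1 : g k k * h k ℓ + ∑ j ∈ Finset.univ.erase k, g k j * h j ℓ = 0 :=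
      (Finset.add_sum_erase _ (fun j => g k j * h j ℓ) (Finset.mem_univ k)).trans h0
    rw [hgkk k, one_mul] at h1
    have h2 : ∑ j ∈ Finset.univ.erase k, g k j * h j ℓ
        = ∑ j ∈ S.erase k, g k j * h j ℓ := by
      symm
      apply Finset.sum_subset (Finset.erase_subset_erase _ (Finset.subset_univ S))
      intro j hj hjS
      have hdj : d j = 0 := by
        by_contra hdj
        exact hjS (Finset.mem_erase.mpr ⟨(Finset.mem_erase.mp hj).1, by simp [hSdef, hdj]⟩)
      rw [hh0 j hdj]
      simp
    rw [h2] at h1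
    have h3 : (∑ j ∈ S.erase k, (-(g k j)) • h j) ℓ
        = -∑ j ∈ S.erase k, g k j * h j ℓ := by
      rw [Finset.sum_apply]
      rw [← Finset.sum_neg_distrib]
      refine Finset.sum_congr rfl fun j _ => ?_
      simp [mul_comm]
    rw [h3]
    linarith
  have hProj : ∀ j, P j *ᵥ h j = h j := by
    intro j
    show (U j * (U j)ᵀ) *ᵥ h j = h j
    have : h j = (U j) *ᵥ d j := rfl
    rw [this, Matrix.mulVec_mulVec, Matrix.mul_assoc, hU j, Matrix.mul_one]
  have hkey : ∀ k, h k = ∑ j ∈ S.erase k, (-(g k j)) • ((P k * P j) *ᵥ h j) := by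
    intro k
    conv_lhs => rw [← hProj k, hcomb k]
    have hlin : (P k) *ᵥ (∑ j ∈ S.erase k, (-(g k j)) • h j)
        = ∑ j ∈ S.erase k, (-(g k j)) • ((P k) *ᵥ h j) := by
      rw [← Matrix.mulVecLin_apply, map_sum]
      refine Finset.sum_congr rfl fun j _ => ?_
      rw [LinearMap.map_smul, Matrix.mulVecLin_apply]
    rw [hlin]
    refine Finset.sum_congr rfl fun j _ => ?_
    rw [show (P k * P j) *ᵥ h j = P k *ᵥ h j by rw [← Matrix.mulVec_mulVec, hProj j]]
  have hbound : ∀ k ∈ S, norm2 (h k) ≤ ∑ j ∈ S.erase k, μ * norm2 (h j) := by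
    intro k _
    calc norm2 (h k)
        = norm2 (∑ j ∈ S.erase k, (-(g k j)) • ((P k * P j) *ᵥ h j)) := by rw [← hkey k]
      _ ≤ ∑ j ∈ S.erase k, norm2 ((-(g k j)) • ((P k * P j) *ᵥ h j)) :=
          FusionAux.norm2_sum_le _ _
      _ ≤ ∑ j ∈ S.erase k, μ * norm2 (h j) := by
          refine Finset.sum_le_sum fun j hj => ?_
          rw [FusionAux.norm2_smul, abs_neg]
          have hkj : k ≠ j := fun e => (Finset.mem_erase.mp hj).1 e.symm
          have hco : |∑ i, A i k * A i j| * opNorm (P k * P j) ≤ fusionCoherence A P :=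
            FusionAux.fusionCoherence_ge A P hkj
          rw [← hμdef] at hco
          have hg : |g k j| = |∑ i, A i k * A i j| := by rw [hgdef]
          calc |g k j| * norm2 ((P k * P j) *ᵥ h j)
              ≤ |g k j| * (opNorm (P k * P j) * norm2 (h j)) :=
                mul_le_mul_of_nonneg_left (FusionAux.norm2_mulVec_le _ _) (abs_nonneg _)
            _ = (|g k j| * opNorm (P k * P j)) * norm2 (h j) := (mul_assoc _ _ _).symm
            _ ≤ μ * norm2 (h j) := by
                rw [hg]
                exact mul_le_mul_of_nonneg_right hco (FusionAux.norm2_nonneg _)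
  set T : ℝ := ∑ k ∈ S, norm2 (h k) with hTdef
  have hT : T ≤ μ * ((s : ℝ) - 1) * T := by
    calc T ≤ ∑ k ∈ S, ∑ j ∈ S.erase k, μ * norm2 (h j) := Finset.sum_le_sum hbound
      _ = μ * ∑ k ∈ S, (T - norm2 (h k)) := by
          rw [Finset.mul_sum]
          refine Finset.sum_congr rfl fun k hk => ?_
          rw [← Finset.mul_sum, Finset.sum_erase_eq_sub hk]
      _ = μ * ((s : ℝ) * T - T) := by
          rw [Finset.sum_sub_distrib, Finset.sum_const, nsmul_eq_mul, ← hTdef, ← hsdef]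
      _ = μ * ((s : ℝ) - 1) * T := by ring
  have hTpos : 0 < T := by
    have h1 : norm2 (h j0) ≤ T :=
      Finset.single_le_sum (fun k _ => FusionAux.norm2_nonneg (h k)) hj0S
    have h2 : 0 < norm2 (h j0) := by
      rcases (FusionAux.norm2_nonneg (h j0)).lt_or_eq with hlt | heq
      · exact hlt
      · exact absurd (hinj j0 (FusionAux.norm2_eq_zero.mp heq.symm)) hj0
    linarith
  have hμs : 1 ≤ μ * ((s : ℝ) - 1) := by nlinarith
  have hs1 : (1 : ℝ) ≤ (s : ℝ) := by
    have : 0 < s := Finset.card_pos.mpr ⟨j0, hj0S⟩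
    exact_mod_cast this
  have hμpos : 0 < μ := by nlinarith
  have hinvle : μ⁻¹ ≤ (s : ℝ) - 1 := by
    rw [inv_eq_one_div, div_le_iff₀ hμpos]
    nlinarith
  have hsub : S ⊆ (Finset.univ.filter fun j => c j ≠ 0)
      ∪ (Finset.univ.filter fun j => c0 j ≠ 0) := by
    intro j hj
    simp only [hSdef, Finset.mem_filter, Finset.mem_univ, true_and] at hj
    by_contra hcon
    simp only [Finset.mem_union, Finset.mem_filter, Finset.mem_univ, true_and,
      not_or, not_not] at hcon
    apply hj
    simp only [hddef]
    rw [hcon.1, hcon.2, sub_self]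
  have hcount : s ≤ l20 c + l20 c0 := by
    have h1 := Finset.card_le_card hsub
    have h2 := Finset.card_union_le (Finset.univ.filter fun j => c j ≠ 0)
      (Finset.univ.filter fun j => c0 j ≠ 0)
    have e1 : (Finset.univ.filter fun j => c j ≠ 0).card = l20 c := by
      unfold l20; congr
    have e2 : (Finset.univ.filter fun j => c0 j ≠ 0).card = l20 c0 := by
      unfold l20; congr
    omega
  have hfinal : (l20 c0 : ℝ) < (l20 c : ℝ) := by
    have hcast : (s : ℝ) ≤ (l20 c : ℝ) + (l20 c0 : ℝ) := by exact_mod_cast hcount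
    linarith
  exact_mod_cast hfinal
end

section
/- Let A ∈ ℝ^{n×N}, let W_1,…,W_N be subspaces of ℝ^M, and suppose the fusion restricted isometry constant of order 2k satisfies δ_{2k} < 1/3. Then (A,(W_j)_{j=1}^N) satisfies the fusion null space property of order k: for every nonzero block vector h = (h_1,…,h_N) with A·U(h) = 0 and every index set S ⊆ {1,…,N} with |S| ≤ k, one has ∑_{j∈S} ‖h_j‖_2 < (1/2) ∑_{j=1}^N ‖h_j‖_2. -/
open scoped BigOperators
open Matrix

open Classical in
/-- Number of nonzero blocks of z = (z_1,…,z_N), z_j ∈ ℝ^M. -/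
noncomputable def blockCount {N M : ℕ} (z : Fin N → Fin M → ℝ) : ℕ :=
  (Finset.univ.filter fun j => z j ≠ 0).card

/-- The action of the block matrix A_P = (a_{ij} P_j) on z = (z_1,…,z_N). -/
noncomputable def APmul {n N M : ℕ} (A : Matrix (Fin n) (Fin N) ℝ)
    (P : Fin N → Matrix (Fin M) (Fin M) ℝ)
    (z : Fin N → Fin M → ℝ) : Fin n → Fin M → ℝ :=
  fun i => ∑ j, A i j • (P j).mulVec (z j)

/-- Squared ℓ₂ (Frobenius) norm of a block vector. -/
noncomputable def frobSq {ι κ : Type*} [Fintype ι] [Fintype κ]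
    (z : ι → κ → ℝ) : ℝ :=
  ∑ j, ∑ i, z j i ^ 2

/-- The fusion restricted isometry constant of order k: the smallest δ ≥ 0
such that (1−δ)‖z‖₂² ≤ ‖A_P z‖₂² ≤ (1+δ)‖z‖₂² for all z with at most k
nonzero blocks. -/
noncomputable def fusionRIPconst {n N M : ℕ} (A : Matrix (Fin n) (Fin N) ℝ)
    (P : Fin N → Matrix (Fin M) (Fin M) ℝ) (k : ℕ) : ℝ :=
  sInf {δ : ℝ | 0 ≤ δ ∧ ∀ z : Fin N → Fin M → ℝ, blockCount z ≤ k →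
    (1 - δ) * frobSq z ≤ frobSq (APmul A P z) ∧
    frobSq (APmul A P z) ≤ (1 + δ) * frobSq z}

section Aux

/-- Frobenius inner product of block vectors. -/
noncomputable def fip {ι κ : Type*} [Fintype ι] [Fintype κ] (x y : ι → κ → ℝ) : ℝ :=
  ∑ j, ∑ i, x j i * y j i

variable {ι κ : Type*} [Fintype ι] [Fintype κ]

lemma frobSq_nonneg (z : ι → κ → ℝ) : 0 ≤ frobSq z :=
  Finset.sum_nonneg fun _ _ => Finset.sum_nonneg fun _ _ => sq_nonneg _

lemma fip_self (z : ι → κ → ℝ) : fip z z = frobSq z := by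
  simp [fip, frobSq, pow_two]

lemma frobSq_eq_zero {z : ι → κ → ℝ} (hz : frobSq z = 0) : z = 0 := by
  funext j i
  have h1 : ∀ j ∈ (Finset.univ : Finset ι), (0:ℝ) ≤ ∑ i, z j i ^ 2 :=
    fun _ _ => Finset.sum_nonneg fun _ _ => sq_nonneg _
  have h2 := (Finset.sum_eq_zero_iff_of_nonneg h1).1 hz j (Finset.mem_univ j)
  have h3 := (Finset.sum_eq_zero_iff_of_nonneg
    (fun i (_ : i ∈ Finset.univ) => sq_nonneg (z j i))).1 h2 i (Finset.mem_univ i)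
  have h4 : z j i = 0 := by
    have := pow_eq_zero_iff (n := 2) (by norm_num) |>.1 h3
    simpa using this
  simpa using h4

lemma frobSq_smul (c : ℝ) (z : ι → κ → ℝ) : frobSq (c • z) = c ^ 2 * frobSq z := by
  simp [frobSq, Finset.mul_sum, mul_pow]

lemma frobSq_neg (z : ι → κ → ℝ) : frobSq (-z) = frobSq z := by
  simp [frobSq]

lemma fip_smul_left (c : ℝ) (x y : ι → κ → ℝ) : fip (c • x) y = c * fip x y := by
  simp [fip, Finset.mul_sum, mul_assoc]

lemma fip_smul_right (c : ℝ) (x y : ι → κ → ℝ) : fip x (c • y) = c * fip x y := by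
  simp only [fip, Finset.mul_sum]
  refine Finset.sum_congr rfl fun j _ => Finset.sum_congr rfl fun i _ => by
    simp [mul_comm, mul_assoc, mul_left_comm]

lemma fip_neg_right (x y : ι → κ → ℝ) : fip x (-y) = -fip x y := by
  simp [fip, ← Finset.sum_neg_distrib]

lemma fip_zero_right (x : ι → κ → ℝ) : fip x 0 = 0 := by simp [fip]

lemma fip_zero_left (x : ι → κ → ℝ) : fip 0 x = 0 := by simp [fip]

lemma fip_sum_right {β : Type*} (x : ι → κ → ℝ) (s : Finset β) (y : β → ι → κ → ℝ) :
    fip x (∑ b ∈ s, y b) = ∑ b ∈ s, fip x (y b) := by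
  simp only [fip, Finset.sum_apply, Finset.mul_sum]
  have h1 : ∀ j : ι, (∑ i : κ, ∑ b ∈ s, x j i * y b j i)
      = ∑ b ∈ s, ∑ i : κ, x j i * y b j i := fun j => Finset.sum_comm
  simp only [h1]
  exact Finset.sum_comm

lemma polarization (x y : ι → κ → ℝ) :
    frobSq (x + y) - frobSq (x - y) = 4 * fip x y := by
  simp only [frobSq, fip, ← Finset.sum_sub_distrib, Finset.mul_sum]
  refine Finset.sum_congr rfl fun j _ => Finset.sum_congr rfl fun i _ => by
    simp only [Pi.add_apply, Pi.sub_apply]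
    ring

end Aux

section Aux2

variable {n N M : ℕ} (A : Matrix (Fin n) (Fin N) ℝ) (P : Fin N → Matrix (Fin M) (Fin M) ℝ)

lemma APmul_apply (z : Fin N → Fin M → ℝ) (i : Fin n) (l : Fin M) :
    APmul A P z i l = ∑ j, A i j * (P j).mulVec (z j) l := by
  simp [APmul]

lemma APmul_add (z w : Fin N → Fin M → ℝ) :
    APmul A P (z + w) = APmul A P z + APmul A P w := by
  funext i l
  simp [APmul_apply, Matrix.mulVec_add, mul_add, Finset.sum_add_distrib]

lemma APmul_smul (c : ℝ) (z : Fin N → Fin M → ℝ) :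
    APmul A P (c • z) = c • APmul A P z := by
  funext i l
  simp [APmul_apply, Matrix.mulVec_smul, Finset.mul_sum, mul_left_comm]

lemma APmul_neg (z : Fin N → Fin M → ℝ) : APmul A P (-z) = -(APmul A P z) := by
  funext i l
  simp [APmul_apply, Matrix.mulVec_neg]

lemma APmul_sub (z w : Fin N → Fin M → ℝ) :
    APmul A P (z - w) = APmul A P z - APmul A P w := by
  rw [sub_eq_add_neg, APmul_add, APmul_neg, sub_eq_add_neg]

lemma APmul_zero : APmul A P 0 = 0 := by
  funext i l
  simp [APmul_apply]

open Classical in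
lemma blockCount_le_of_support {z : Fin N → Fin M → ℝ} {T : Finset (Fin N)}
    (hT : ∀ j, z j ≠ 0 → j ∈ T) : blockCount z ≤ T.card := by
  classical
  refine Finset.card_le_card ?_
  intro j hj
  rw [Finset.mem_filter] at hj
  exact hT j hj.2

open Classical in
lemma blockCount_add_le (z w : Fin N → Fin M → ℝ) :
    blockCount (z + w) ≤ blockCount z + blockCount w := by
  classical
  refine le_trans (Finset.card_le_card ?_) (Finset.card_union_le _ _)
  intro j hj
  rw [Finset.mem_filter] at hj
  rw [Finset.mem_union, Finset.mem_filter, Finset.mem_filter]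
  by_contra hc
  push_neg at hc
  have h1 : z j = 0 := by simpa using hc.1
  have h2 : w j = 0 := by simpa using hc.2
  exact hj.2 (by simp [Pi.add_apply, h1, h2])

open Classical in
lemma blockCount_smul_le (c : ℝ) (z : Fin N → Fin M → ℝ) :
    blockCount (c • z) ≤ blockCount z := by
  classical
  refine Finset.card_le_card ?_
  intro j hj
  rw [Finset.mem_filter] at hj ⊢
  refine ⟨hj.1, fun h0 => hj.2 ?_⟩
  funext i
  simp [Pi.smul_apply, show z j = 0 from h0]

lemma frobSq_add_of_disj {z w : Fin N → Fin M → ℝ} (hd : ∀ j, z j = 0 ∨ w j = 0) :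
    frobSq (z + w) = frobSq z + frobSq w := by
  rw [frobSq, frobSq, frobSq, ← Finset.sum_add_distrib]
  refine Finset.sum_congr rfl fun j _ => ?_
  rcases hd j with h | h <;> simp [Pi.add_apply, h]

lemma frobSq_sub_of_disj {z w : Fin N → Fin M → ℝ} (hd : ∀ j, z j = 0 ∨ w j = 0) :
    frobSq (z - w) = frobSq z + frobSq w := by
  have hd' : ∀ j, z j = 0 ∨ (-w) j = 0 := fun j => by
    rcases hd j with h | h
    · exact Or.inl h
    · exact Or.inr (by simp [h])
  rw [sub_eq_add_neg, frobSq_add_of_disj hd', frobSq_neg]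

/-- Polarization cross-term bound from the RIP. -/
lemma cross_bound {δ : ℝ} {K : ℕ} (hδ0 : 0 ≤ δ)
    (hRIP : ∀ y : Fin N → Fin M → ℝ, blockCount y ≤ K →
      (1 - δ) * frobSq y ≤ frobSq (APmul A P y) ∧
      frobSq (APmul A P y) ≤ (1 + δ) * frobSq y)
    (z w : Fin N → Fin M → ℝ) (hd : ∀ j, z j = 0 ∨ w j = 0)
    (hcnt : blockCount z + blockCount w ≤ K) :
    fip (APmul A P z) (APmul A P w)
      ≤ δ * Real.sqrt (frobSq z) * Real.sqrt (frobSq w) := by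
  have key : ∀ z' w' : Fin N → Fin M → ℝ, (∀ j, z' j = 0 ∨ w' j = 0) →
      blockCount z' + blockCount w' ≤ K →
      fip (APmul A P z') (APmul A P w') ≤ δ * (frobSq z' + frobSq w') / 2 := by
    intro z' w' hd' hc'
    have h1 : blockCount (z' + w') ≤ K := le_trans (blockCount_add_le z' w') hc'
    have h2 : blockCount (z' - w') ≤ K := by
      rw [sub_eq_add_neg]
      refine le_trans (blockCount_add_le z' (-w')) (le_trans ?_ hc')
      have : blockCount (-w') ≤ blockCount w' := by
        have := blockCount_smul_le (-1 : ℝ) w'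
        simpa using this
      omega
    have e1 : frobSq (z' + w') = frobSq z' + frobSq w' := frobSq_add_of_disj hd'
    have e2 : frobSq (z' - w') = frobSq z' + frobSq w' := frobSq_sub_of_disj hd'
    have pol : frobSq (APmul A P z' + APmul A P w')
        - frobSq (APmul A P z' - APmul A P w')
        = 4 * fip (APmul A P z') (APmul A P w') := polarization _ _
    have u := (hRIP _ h1).2
    have l := (hRIP _ h2).1
    rw [APmul_add] at u
    rw [APmul_sub] at l
    rw [e1] at u
    rw [e2] at l
    nlinarith [u, l, pol]
  -- now rescale
  by_cases hz : frobSq z = 0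
  · have : z = 0 := frobSq_eq_zero hz
    subst this
    rw [APmul_zero, fip_zero_left, hz]
    simp [mul_nonneg, hδ0, Real.sqrt_nonneg]
  by_cases hw : frobSq w = 0
  · have : w = 0 := frobSq_eq_zero hw
    subst this
    rw [APmul_zero, fip_zero_right, hw]
    simp
  have hzpos : 0 < frobSq z := lt_of_le_of_ne (frobSq_nonneg z) (Ne.symm hz)
  have hwpos : 0 < frobSq w := lt_of_le_of_ne (frobSq_nonneg w) (Ne.symm hw)
  set s : ℝ := Real.sqrt (frobSq z) with hs
  set t : ℝ := Real.sqrt (frobSq w) with ht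
  have hspos : 0 < s := Real.sqrt_pos.2 hzpos
  have htpos : 0 < t := Real.sqrt_pos.2 hwpos
  have hs2 : s ^ 2 = frobSq z := Real.sq_sqrt hzpos.le
  have ht2 : t ^ 2 = frobSq w := Real.sq_sqrt hwpos.le
  set lam : ℝ := Real.sqrt (t / s) with hlam
  have hlampos : 0 < lam := Real.sqrt_pos.2 (div_pos htpos hspos)
  have hlam2 : lam ^ 2 = t / s := Real.sq_sqrt (div_pos htpos hspos).le
  have hd' : ∀ j, (lam • z) j = 0 ∨ (lam⁻¹ • w) j = 0 := fun j => by
    rcases hd j with h | h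
    · exact Or.inl (by simp [Pi.smul_apply, h])
    · exact Or.inr (by simp [Pi.smul_apply, h])
  have hc' : blockCount (lam • z) + blockCount (lam⁻¹ • w) ≤ K :=
    le_trans (add_le_add (blockCount_smul_le _ _) (blockCount_smul_le _ _)) hcnt
  have hk := key (lam • z) (lam⁻¹ • w) hd' hc'
  rw [APmul_smul, APmul_smul, fip_smul_left, fip_smul_right, frobSq_smul, frobSq_smul] at hk
  have hfix : lam * (lam⁻¹ * fip (APmul A P z) (APmul A P w))
      = fip (APmul A P z) (APmul A P w) := by
    field_simp
  rw [hfix] at hk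
  have hrhs : δ * (lam ^ 2 * frobSq z + lam⁻¹ ^ 2 * frobSq w) / 2 = δ * s * t := by
    have hinv : lam⁻¹ ^ 2 = s / t := by
      rw [inv_pow, hlam2]
      field_simp
    rw [hlam2, hinv, ← hs2, ← ht2]
    field_simp
    ring
  rw [hrhs] at hk
  exact hk

end Aux2

section Aux3

lemma ripset_nonempty {n N M : ℕ} (A : Matrix (Fin n) (Fin N) ℝ)
    (P : Fin N → Matrix (Fin M) (Fin M) ℝ) (k : ℕ) :
    Set.Nonempty {δ : ℝ | 0 ≤ δ ∧ ∀ z : Fin N → Fin M → ℝ, blockCount z ≤ k →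
      (1 - δ) * frobSq z ≤ frobSq (APmul A P z) ∧
      frobSq (APmul A P z) ≤ (1 + δ) * frobSq z} := by
  set C : ℝ := (N : ℝ) * ∑ j, (∑ i, A i j ^ 2) * (∑ l, ∑ t, P j l t ^ 2) with hC
  have hC0 : 0 ≤ C := by
    refine mul_nonneg (Nat.cast_nonneg _) (Finset.sum_nonneg fun j _ => mul_nonneg ?_ ?_)
    · exact Finset.sum_nonneg fun _ _ => sq_nonneg _
    · exact Finset.sum_nonneg fun _ _ => Finset.sum_nonneg fun _ _ => sq_nonneg _
  have main : ∀ z : Fin N → Fin M → ℝ, frobSq (APmul A P z) ≤ C * frobSq z := by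
    intro z
    have step1 : frobSq (APmul A P z)
        ≤ (N : ℝ) * ∑ i, ∑ l, ∑ j, A i j ^ 2 * ((P j).mulVec (z j) l) ^ 2 := by
      rw [frobSq, Finset.mul_sum]
      refine Finset.sum_le_sum fun i _ => ?_
      rw [Finset.mul_sum]
      refine Finset.sum_le_sum fun l _ => ?_
      have cs := Finset.sum_mul_sq_le_sq_mul_sq Finset.univ (fun _ : Fin N => (1:ℝ))
        (fun j => A i j * (P j).mulVec (z j) l)
      calc (APmul A P z i l) ^ 2
          = (∑ j, A i j * (P j).mulVec (z j) l) ^ 2 := by rw [APmul_apply]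
        _ ≤ (N : ℝ) * ∑ j, (A i j * (P j).mulVec (z j) l) ^ 2 := by
            simpa using cs
        _ = (N : ℝ) * ∑ j, A i j ^ 2 * ((P j).mulVec (z j) l) ^ 2 := by
            simp [mul_pow]
    have rearr : (∑ i, ∑ l, ∑ j, A i j ^ 2 * ((P j).mulVec (z j) l) ^ 2)
        = ∑ j, (∑ i, A i j ^ 2) * (∑ l, ((P j).mulVec (z j) l) ^ 2) := by
      have h1 : ∀ i : Fin n, (∑ l, ∑ j, A i j ^ 2 * ((P j).mulVec (z j) l) ^ 2)
          = ∑ j, A i j ^ 2 * ∑ l, ((P j).mulVec (z j) l) ^ 2 := by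
        intro i
        rw [Finset.sum_comm]
        exact Finset.sum_congr rfl fun j _ => (Finset.mul_sum _ _ _).symm
      simp only [h1]
      rw [Finset.sum_comm]
      exact Finset.sum_congr rfl fun j _ => (Finset.sum_mul _ _ _).symm
    have step3 : ∀ j, (∑ l, ((P j).mulVec (z j) l) ^ 2)
        ≤ (∑ l, ∑ t, P j l t ^ 2) * ∑ t, z j t ^ 2 := by
      intro j
      rw [Finset.sum_mul]
      refine Finset.sum_le_sum fun l _ => ?_
      have cs := Finset.sum_mul_sq_le_sq_mul_sq Finset.univ (fun t => P j l t) (fun t => z j t)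
      have e : (P j).mulVec (z j) l = ∑ t, P j l t * z j t := by
        simp [Matrix.mulVec, dotProduct]
      rw [e]
      exact cs
    have step4 : (∑ j, (∑ i, A i j ^ 2) * (∑ l, ((P j).mulVec (z j) l) ^ 2))
        ≤ ∑ j, (∑ i, A i j ^ 2) * ((∑ l, ∑ t, P j l t ^ 2) * ∑ t, z j t ^ 2) := by
      refine Finset.sum_le_sum fun j _ => ?_
      exact mul_le_mul_of_nonneg_left (step3 j)
        (Finset.sum_nonneg fun _ _ => sq_nonneg _)
    have step5 : (∑ j, (∑ i, A i j ^ 2) * ((∑ l, ∑ t, P j l t ^ 2) * ∑ t, z j t ^ 2))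
        ≤ (∑ j, (∑ i, A i j ^ 2) * (∑ l, ∑ t, P j l t ^ 2)) * frobSq z := by
      rw [frobSq, Finset.sum_mul]
      refine Finset.sum_le_sum fun j _ => ?_
      rw [← mul_assoc]
      have hterm : (∑ t, z j t ^ 2) ≤ ∑ j', ∑ t, z j' t ^ 2 :=
        Finset.single_le_sum (f := fun j' => ∑ t, z j' t ^ 2)
          (fun _ _ => Finset.sum_nonneg fun _ _ => sq_nonneg _) (Finset.mem_univ j)
      exact mul_le_mul_of_nonneg_left hterm
        (mul_nonneg (Finset.sum_nonneg fun _ _ => sq_nonneg _)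
          (Finset.sum_nonneg fun _ _ => Finset.sum_nonneg fun _ _ => sq_nonneg _))
    calc frobSq (APmul A P z)
        ≤ (N : ℝ) * ∑ i, ∑ l, ∑ j, A i j ^ 2 * ((P j).mulVec (z j) l) ^ 2 := step1
      _ = (N : ℝ) * ∑ j, (∑ i, A i j ^ 2) * (∑ l, ((P j).mulVec (z j) l) ^ 2) := by rw [rearr]
      _ ≤ (N : ℝ) * ∑ j, (∑ i, A i j ^ 2) * ((∑ l, ∑ t, P j l t ^ 2) * ∑ t, z j t ^ 2) := by
          exact mul_le_mul_of_nonneg_left step4 (Nat.cast_nonneg _)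
      _ ≤ (N : ℝ) * ((∑ j, (∑ i, A i j ^ 2) * (∑ l, ∑ t, P j l t ^ 2)) * frobSq z) := by
          exact mul_le_mul_of_nonneg_left step5 (Nat.cast_nonneg _)
      _ = C * frobSq z := by rw [hC]; ring
  refine ⟨1 + C, by linarith, fun z _ => ⟨?_, ?_⟩⟩
  · have h1 := frobSq_nonneg (APmul A P z)
    have h2 := frobSq_nonneg z
    nlinarith
  · have h1 := main z
    have h2 := frobSq_nonneg z
    nlinarith

end Aux3

section Aux4

variable {n N M : ℕ} (A : Matrix (Fin n) (Fin N) ℝ) (P : Fin N → Matrix (Fin M) (Fin M) ℝ)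

/-- Restriction of a block vector to a set of blocks. -/
noncomputable def zres {N M : ℕ} (T : Finset (Fin N)) (z : Fin N → Fin M → ℝ) :
    Fin N → Fin M → ℝ :=
  fun j => if j ∈ T then z j else 0

lemma zres_blockCount (T : Finset (Fin N)) (z : Fin N → Fin M → ℝ) :
    blockCount (zres T z) ≤ T.card :=
  blockCount_le_of_support fun j hj => by
    by_contra hc
    exact hj (by simp [zres, hc])

lemma frobSq_zres (T : Finset (Fin N)) (z : Fin N → Fin M → ℝ) :
    frobSq (zres T z) = ∑ j ∈ T, ∑ i, z j i ^ 2 := by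
  have e : ∀ j, (∑ i, (zres T z j i) ^ 2) = if j ∈ T then (∑ i, z j i ^ 2) else 0 := by
    intro j; by_cases hj : j ∈ T <;> simp [zres, hj]
  rw [frobSq]
  simp only [e]
  rw [Finset.sum_ite_mem, Finset.univ_inter]

lemma APmul_zres (T : Finset (Fin N)) (z : Fin N → Fin M → ℝ) (i : Fin n) (l : Fin M) :
    APmul A P (zres T z) i l = ∑ j ∈ T, A i j * (P j).mulVec (z j) l := by
  have e : ∀ j, A i j * (P j).mulVec (zres T z j) l
      = if j ∈ T then A i j * (P j).mulVec (z j) l else 0 := by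
    intro j; by_cases hj : j ∈ T <;> simp [zres, hj]
  rw [APmul_apply]
  simp only [e]
  rw [Finset.sum_ite_mem, Finset.univ_inter]

end Aux4

/-- If the fusion RIP constant of order 2k satisfies δ_{2k} < 1/3, then
(A,(W_j)) satisfies the fusion null space property of order k. -/
theorem stmt5 {n N M : ℕ} {m : Fin N → ℕ} (k : ℕ)
    (A : Matrix (Fin n) (Fin N) ℝ)
    (U : ∀ j, Matrix (Fin M) (Fin (m j)) ℝ)
    (hU : ∀ j, (U j)ᵀ * U j = 1)
    (hδ : fusionRIPconst A (fun j => U j * (U j)ᵀ) (2 * k) < 1 / 3) :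
    ∀ h : (∀ j, Fin (m j) → ℝ), h ≠ 0 → A * Ucmat U h = 0 →
      ∀ S : Finset (Fin N), S.card ≤ k →
        ∑ j ∈ S, norm2 (h j) < (1 / 2 : ℝ) * ∑ j, norm2 (h j) := by
  classical
  intro h hne hAU S hS
  set P : Fin N → Matrix (Fin M) (Fin M) ℝ := fun j => U j * (U j)ᵀ with hPdef
  rw [fusionRIPconst] at hδ
  obtain ⟨δ, hδmem, hδ3⟩ := exists_lt_of_csInf_lt (ripset_nonempty A P (2 * k)) hδ
  obtain ⟨hδ0, hRIP⟩ := hδmem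
  set a : Fin N → ℝ := fun j => norm2 (h j) with hadef
  have ha0 : ∀ j, 0 ≤ a j := fun j => Real.sqrt_nonneg _
  set z : Fin N → Fin M → ℝ := fun j => (U j).mulVec (h j) with hzdef
  -- norm preservation
  have hnorm : ∀ j, (∑ i, z j i ^ 2) = ∑ i, h j i ^ 2 := by
    intro j
    have e1 : (∑ i, z j i ^ 2) = dotProduct (z j) (z j) := by
      simp [dotProduct, pow_two]
    have e2 : (∑ i, h j i ^ 2) = dotProduct (h j) (h j) := by
      simp [dotProduct, pow_two]
    rw [e1, e2]
    show dotProduct ((U j).mulVec (h j)) ((U j).mulVec (h j)) = _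
    rw [Matrix.dotProduct_mulVec]
    have e4 : Matrix.vecMul ((U j).mulVec (h j)) (U j) = h j := by
      rw [← Matrix.mulVec_transpose, Matrix.mulVec_mulVec, hU j, Matrix.one_mulVec]
    rw [e4]
  have ha2 : ∀ j, a j ^ 2 = ∑ i, z j i ^ 2 := by
    intro j
    rw [hnorm j]
    exact Real.sq_sqrt (Finset.sum_nonneg fun _ _ => sq_nonneg _)
  -- the null-space condition
  have hAPz : ∀ (i : Fin n) (l : Fin M), (∑ j, A i j * (P j).mulVec (z j) l) = 0 := by
    intro i l
    have hPz : ∀ j, (P j).mulVec (z j) = z j := by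
      intro j
      show (U j * (U j)ᵀ).mulVec ((U j).mulVec (h j)) = (U j).mulVec (h j)
      rw [Matrix.mulVec_mulVec, Matrix.mul_assoc, hU j, Matrix.mul_one]
    have h0 : (A * Ucmat U h) i l = 0 := by rw [hAU]; simp
    rw [Matrix.mul_apply] at h0
    simp only [hPz]
    simpa [Ucmat] using h0
  -- positivity of the total norm
  obtain ⟨j0, hj0⟩ : ∃ j, h j ≠ 0 := by
    by_contra hc; push_neg at hc; exact hne (funext fun j => hc j)
  have hsumpos : 0 < ∑ j, a j := by
    refine Finset.sum_pos' (fun j _ => ha0 j) ⟨j0, Finset.mem_univ _, ?_⟩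
    obtain ⟨i0, hi0⟩ : ∃ i, h j0 i ≠ 0 := by
      by_contra hc; push_neg at hc; exact hj0 (funext hc)
    have hpos : 0 < ∑ i, h j0 i ^ 2 :=
      Finset.sum_pos' (fun _ _ => sq_nonneg _)
        ⟨i0, Finset.mem_univ _, pow_two_pos_of_ne_zero hi0⟩
    exact Real.sqrt_pos.2 hpos
  -- trivial case k = 0
  rcases Nat.eq_zero_or_pos k with hk0 | hk
  · have hSe : S = ∅ := Finset.card_eq_zero.1 (le_antisymm (hk0 ▸ hS) (Nat.zero_le _))
    rw [hSe]
    simpa using by linarith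
  have hN : 0 < N := j0.pos
  -- sorting
  set τ : Equiv.Perm (Fin N) := Tuple.sort (fun j => -a j) with hτ
  have hanti : ∀ p q : Fin N, p ≤ q → a (τ q) ≤ a (τ p) := by
    intro p q hpq
    have := Tuple.monotone_sort (fun j => -a j) hpq
    simpa using this
  -- chunks
  set T : ℕ → Finset (Fin N) :=
    fun i => Finset.univ.filter (fun j => ((τ.symm j : Fin N) : ℕ) / k = i) with hT
  have hTmem : ∀ (i : ℕ) (j : Fin N), j ∈ T i ↔ ((τ.symm j : Fin N) : ℕ) / k = i := by
    intro i j
    rw [hT]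
    simp
  have hfib : ∀ g : Fin N → ℝ, (∑ i ∈ Finset.range N, ∑ j ∈ T i, g j) = ∑ j, g j := by
    intro g
    exact Finset.sum_fiberwise_of_maps_to
      (fun j _ => Finset.mem_range.2
        (lt_of_le_of_lt (Nat.div_le_self _ _) (τ.symm j).isLt)) g
  have hcard : ∀ i, (T i).card ≤ k := by
    intro i
    have hh : (T i).card ≤ (Finset.univ : Finset (Fin k)).card := by
      refine Finset.card_le_card_of_injOn
        (fun j => (⟨((τ.symm j : Fin N) : ℕ) % k, Nat.mod_lt _ hk⟩ : Fin k))
        (fun j _ => Finset.mem_univ _) ?_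
      intro x hx y hy hxy
      rw [Finset.mem_coe, hTmem] at hx hy
      simp only [Fin.mk.injEq] at hxy
      have hval : ((τ.symm x : Fin N) : ℕ) = ((τ.symm y : Fin N) : ℕ) := by
        conv_lhs => rw [← Nat.div_add_mod ((τ.symm x : Fin N) : ℕ) k]
        conv_rhs => rw [← Nat.div_add_mod ((τ.symm y : Fin N) : ℕ) k]
        rw [hx, hy, hxy]
      exact τ.symm.injective (Fin.ext hval)
    simpa using hh
  -- averaging bound between consecutive chunks
  have havg : ∀ i : ℕ, ∀ j ∈ T (i + 1), (k : ℝ) * a j ≤ ∑ j' ∈ T i, a j' := by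
    intro i j hj
    have hjdiv : ((τ.symm j : Fin N) : ℕ) / k = i + 1 := (hTmem _ _).1 hj
    have h2 : (i + 1) * k ≤ ((τ.symm j : Fin N) : ℕ) :=
      (Nat.le_div_iff_mul_le hk).1 (le_of_eq hjdiv.symm)
    have h3 : ((τ.symm j : Fin N) : ℕ) < N := (τ.symm j).isLt
    have hstep : ∀ r : Fin k, i * k + (r : ℕ) < (i + 1) * k := by
      intro r
      have hexp : (i + 1) * k = i * k + k := by ring
      rw [hexp]
      exact Nat.add_lt_add_left r.isLt _
    have hlt : ∀ r : Fin k, i * k + (r : ℕ) < N := fun r =>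
      lt_of_lt_of_le (hstep r) (le_trans h2 h3.le)
    have hmemTi : ∀ r : Fin k, τ ⟨i * k + (r : ℕ), hlt r⟩ ∈ T i := by
      intro r
      refine (hTmem _ _).2 ?_
      rw [Equiv.symm_apply_apply]
      show (i * k + (r : ℕ)) / k = i
      rw [add_comm, mul_comm, Nat.add_mul_div_left _ _ hk, Nat.div_eq_of_lt r.isLt, zero_add]
    have hle : ∀ r : Fin k, a j ≤ a (τ ⟨i * k + (r : ℕ), hlt r⟩) := by
      intro r
      have hple : (⟨i * k + (r : ℕ), hlt r⟩ : Fin N) ≤ τ.symm j := by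
        rw [Fin.le_def]
        show i * k + (r : ℕ) ≤ ((τ.symm j : Fin N) : ℕ)
        exact le_of_lt (lt_of_lt_of_le (hstep r) h2)
      have := hanti _ _ hple
      simpa [Equiv.apply_symm_apply] using this
    have hinj : Function.Injective (fun r : Fin k => τ ⟨i * k + (r : ℕ), hlt r⟩) := by
      intro r r' hrr
      have hv : i * k + (r : ℕ) = i * k + (r' : ℕ) := by
        simpa using congrArg Fin.val (τ.injective hrr)
      exact Fin.ext (Nat.add_left_cancel hv)
    calc (k : ℝ) * a j = ∑ _r : Fin k, a j := by
          simp [Finset.sum_const, nsmul_eq_mul]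
      _ ≤ ∑ r : Fin k, a (τ ⟨i * k + (r : ℕ), hlt r⟩) :=
          Finset.sum_le_sum fun r _ => hle r
      _ = ∑ j' ∈ Finset.univ.image (fun r : Fin k => τ ⟨i * k + (r : ℕ), hlt r⟩), a j' :=
          (Finset.sum_image (fun x _ y _ hxy => hinj hxy)).symm
      _ ≤ ∑ j' ∈ T i, a j' := by
          refine Finset.sum_le_sum_of_subset_of_nonneg ?_ (fun j' _ _ => ha0 j')
          intro x hx
          obtain ⟨r, _, rfl⟩ := Finset.mem_image.1 hx
          exact hmemTi r
  -- chunk ℓ² bound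
  have hkR : (0 : ℝ) < k := by exact_mod_cast hk
  have hchunk : ∀ i : ℕ, Real.sqrt (∑ j ∈ T (i + 1), a j ^ 2)
      ≤ Real.sqrt k * ((∑ j' ∈ T i, a j') / k) := by
    intro i
    set β : ℝ := (∑ j' ∈ T i, a j') / k with hβ
    have hβ0 : 0 ≤ β :=
      div_nonneg (Finset.sum_nonneg fun _ _ => ha0 _) (Nat.cast_nonneg _)
    have hsq : (∑ j ∈ T (i + 1), a j ^ 2) ≤ (k : ℝ) * β ^ 2 := by
      have hb : ∀ j ∈ T (i + 1), a j ^ 2 ≤ β ^ 2 := by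
        intro j hj
        have h1 := havg i j hj
        have h2 : a j ≤ β := by
          rw [hβ, le_div_iff₀ hkR]
          linarith [h1]
        exact pow_le_pow_left₀ (ha0 j) h2 2
      calc (∑ j ∈ T (i + 1), a j ^ 2) ≤ (T (i + 1)).card • (β ^ 2) :=
            Finset.sum_le_card_nsmul _ _ _ hb
        _ = ((T (i + 1)).card : ℝ) * β ^ 2 := by rw [nsmul_eq_mul]
        _ ≤ (k : ℝ) * β ^ 2 := by
            have hc := hcard (i + 1)
            exact mul_le_mul_of_nonneg_right (by exact_mod_cast hc) (sq_nonneg _)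
    calc Real.sqrt (∑ j ∈ T (i + 1), a j ^ 2) ≤ Real.sqrt ((k : ℝ) * β ^ 2) :=
          Real.sqrt_le_sqrt hsq
      _ = Real.sqrt k * β := by
          rw [Real.sqrt_mul (Nat.cast_nonneg _), Real.sqrt_sq hβ0]
  -- Σ bound
  set Sig : ℝ := ∑ i ∈ Finset.Ico 1 N, Real.sqrt (∑ j ∈ T i, a j ^ 2) with hSig
  have hSignonneg : 0 ≤ Sig :=
    Finset.sum_nonneg fun _ _ => Real.sqrt_nonneg _
  have hSigbound : Sig ≤ Real.sqrt k / k * ∑ j, a j := by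
    have e1 : Sig = ∑ i ∈ Finset.range (N - 1), Real.sqrt (∑ j ∈ T (1 + i), a j ^ 2) := by
      rw [hSig, Finset.sum_Ico_eq_sum_range]
    calc Sig = ∑ i ∈ Finset.range (N - 1), Real.sqrt (∑ j ∈ T (i + 1), a j ^ 2) := by
          rw [e1]
          exact Finset.sum_congr rfl fun i _ => by rw [Nat.add_comm 1 i]
      _ ≤ ∑ i ∈ Finset.range (N - 1), Real.sqrt k * ((∑ j' ∈ T i, a j') / k) :=
          Finset.sum_le_sum fun i _ => hchunk i
      _ = Real.sqrt k / k * ∑ i ∈ Finset.range (N - 1), ∑ j' ∈ T i, a j' := by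
          rw [Finset.mul_sum]
          exact Finset.sum_congr rfl fun i _ => by ring
      _ ≤ Real.sqrt k / k * ∑ i ∈ Finset.range N, ∑ j' ∈ T i, a j' := by
          refine mul_le_mul_of_nonneg_left ?_ (by positivity)
          refine Finset.sum_le_sum_of_subset_of_nonneg
            (Finset.range_subset_range.2 (by omega)) ?_
          exact fun i _ _ => Finset.sum_nonneg fun j' _ => ha0 j'
      _ = Real.sqrt k / k * ∑ j, a j := by rw [hfib]
  -- the RIP chain
  set Q0 : ℝ := ∑ j ∈ T 0, a j ^ 2 with hQ0
  have hQ0nonneg : 0 ≤ Q0 := Finset.sum_nonneg fun _ _ => sq_nonneg _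
  have hfrob_zres : ∀ i : ℕ, frobSq (zres (T i) z) = ∑ j ∈ T i, a j ^ 2 := by
    intro i
    rw [frobSq_zres]
    exact Finset.sum_congr rfl fun j _ => (ha2 j).symm
  have hdisj : ∀ i i' : ℕ, i ≠ i' → ∀ j, zres (T i) z j = 0 ∨ zres (T i') z j = 0 := by
    intro i i' hii j
    by_cases hmem : j ∈ T i
    · right
      have hnm : j ∉ T i' := by
        intro hmem'
        exact hii (((hTmem _ _).1 hmem).symm.trans ((hTmem _ _).1 hmem'))
      simp [zres, hnm]
    · left; simp [zres, hmem]
  have hv0cnt : blockCount (zres (T 0) z) ≤ 2 * k :=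
    le_trans (zres_blockCount _ _) (le_trans (hcard 0) (by omega))
  have hlow := (hRIP (zres (T 0) z) hv0cnt).1
  have hAPdecomp : APmul A P (zres (T 0) z)
      = ∑ i ∈ Finset.Ico 1 N, (-(APmul A P (zres (T i) z))) := by
    funext i0 l
    have hz0 : (∑ i ∈ Finset.range N, APmul A P (zres (T i) z) i0 l) = 0 := by
      have e : ∀ i : ℕ, APmul A P (zres (T i) z) i0 l
          = ∑ j ∈ T i, A i0 j * (P j).mulVec (z j) l := fun i => APmul_zres A P _ _ _ _
      simp only [e]
      rw [hfib (fun j => A i0 j * (P j).mulVec (z j) l)]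
      exact hAPz i0 l
    have hsplit : (∑ i ∈ Finset.range N, APmul A P (zres (T i) z) i0 l)
        = APmul A P (zres (T 0) z) i0 l
          + ∑ i ∈ Finset.Ico 1 N, APmul A P (zres (T i) z) i0 l := by
      rw [Finset.range_eq_Ico, Finset.sum_eq_sum_Ico_succ_bot hN]
    have happ : (∑ i ∈ Finset.Ico 1 N, (-(APmul A P (zres (T i) z)))) i0 l
        = ∑ i ∈ Finset.Ico 1 N, (-(APmul A P (zres (T i) z) i0 l)) := by
      simp [Finset.sum_apply]
    rw [happ, Finset.sum_neg_distrib]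
    linarith [hz0, hsplit]
  have hupper : frobSq (APmul A P (zres (T 0) z)) ≤ δ * Real.sqrt Q0 * Sig := by
    rw [← fip_self]
    nth_rewrite 2 [hAPdecomp]
    rw [fip_sum_right]
    have hterm : ∀ i ∈ Finset.Ico 1 N,
        fip (APmul A P (zres (T 0) z)) (-(APmul A P (zres (T i) z)))
          ≤ δ * Real.sqrt Q0 * Real.sqrt (∑ j ∈ T i, a j ^ 2) := by
      intro i hi
      have hi1 : i ≠ 0 := by
        have := (Finset.mem_Ico.1 hi).1; omega
      have hneq : (0 : ℕ) ≠ i := fun e => hi1 e.symm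
      rw [← APmul_neg]
      have hd : ∀ j, zres (T 0) z j = 0 ∨ (-(zres (T i) z)) j = 0 := by
        intro j
        rcases hdisj 0 i hneq j with hc | hc
        · exact Or.inl hc
        · exact Or.inr (by simp [hc])
      have hcnt : blockCount (zres (T 0) z) + blockCount (-(zres (T i) z)) ≤ 2 * k := by
        have c1 : blockCount (zres (T 0) z) ≤ k := le_trans (zres_blockCount _ _) (hcard 0)
        have c2 : blockCount (-(zres (T i) z)) ≤ k := by
          have hsm : blockCount (-(zres (T i) z)) ≤ blockCount (zres (T i) z) := by
            have := blockCount_smul_le (-1 : ℝ) (zres (T i) z)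
            simpa using this
          exact le_trans hsm (le_trans (zres_blockCount _ _) (hcard i))
        omega
      have := cross_bound A P hδ0 hRIP (zres (T 0) z) (-(zres (T i) z)) hd hcnt
      rw [frobSq_neg, hfrob_zres 0, hfrob_zres i] at this
      exact this
    calc (∑ i ∈ Finset.Ico 1 N,
            fip (APmul A P (zres (T 0) z)) (-(APmul A P (zres (T i) z))))
        ≤ ∑ i ∈ Finset.Ico 1 N, δ * Real.sqrt Q0 * Real.sqrt (∑ j ∈ T i, a j ^ 2) :=
          Finset.sum_le_sum hterm
      _ = δ * Real.sqrt Q0 * Sig := by rw [hSig, Finset.mul_sum]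
  -- combine the RIP chain
  have hkey : (1 - δ) * Q0 ≤ δ * Real.sqrt Q0 * Sig := by
    calc (1 - δ) * Q0 = (1 - δ) * frobSq (zres (T 0) z) := by rw [hfrob_zres 0]
      _ ≤ frobSq (APmul A P (zres (T 0) z)) := hlow
      _ ≤ δ * Real.sqrt Q0 * Sig := hupper
  have h1δ : 0 < 1 - δ := by linarith
  have hsqrtQ : (1 - δ) * Real.sqrt Q0 ≤ δ * Sig := by
    rcases eq_or_lt_of_le (Real.sqrt_nonneg Q0) with hq | hq
    · rw [← hq, mul_zero]
      exact mul_nonneg hδ0 hSignonneg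
    · by_contra hcon
      push_neg at hcon
      have hmul := mul_lt_mul_of_pos_right hcon hq
      have hQ0' : Real.sqrt Q0 * Real.sqrt Q0 = Q0 := Real.mul_self_sqrt hQ0nonneg
      nlinarith [hkey]
  -- Cauchy–Schwarz on T 0
  have hT0cs : (∑ j ∈ T 0, a j) ≤ Real.sqrt k * Real.sqrt Q0 := by
    have cs := Finset.sum_mul_sq_le_sq_mul_sq (T 0) (fun _ => (1 : ℝ)) a
    have h1 : (∑ j ∈ T 0, a j) ^ 2 ≤ (k : ℝ) * Q0 := by
      have hc : ((T 0).card : ℝ) ≤ (k : ℝ) := by exact_mod_cast hcard 0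
      calc (∑ j ∈ T 0, a j) ^ 2 = (∑ j ∈ T 0, 1 * a j) ^ 2 := by simp
        _ ≤ (∑ _j ∈ T 0, (1 : ℝ) ^ 2) * ∑ j ∈ T 0, a j ^ 2 := cs
        _ = ((T 0).card : ℝ) * Q0 := by simp [hQ0]
        _ ≤ (k : ℝ) * Q0 := mul_le_mul_of_nonneg_right hc hQ0nonneg
    have h2 : (∑ j ∈ T 0, a j) = Real.sqrt ((∑ j ∈ T 0, a j) ^ 2) :=
      (Real.sqrt_sq (Finset.sum_nonneg fun j _ => ha0 j)).symm
    rw [h2]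
    calc Real.sqrt ((∑ j ∈ T 0, a j) ^ 2) ≤ Real.sqrt ((k : ℝ) * Q0) :=
          Real.sqrt_le_sqrt h1
      _ = Real.sqrt k * Real.sqrt Q0 := Real.sqrt_mul (Nat.cast_nonneg _) _
  -- any small set is dominated by the top chunk
  have hSdom : (∑ j ∈ S, a j) ≤ ∑ j ∈ T 0, a j := by
    rcases le_or_gt N k with hNk | hkN
    · have hsub : S ⊆ T 0 := fun j _ =>
        (hTmem _ _).2 (Nat.div_eq_of_lt (lt_of_lt_of_le (τ.symm j).isLt hNk))
      exact Finset.sum_le_sum_of_subset_of_nonneg hsub (fun j _ _ => ha0 j)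
    · set pmin : Fin N := ⟨k - 1, by omega⟩ with hpmin
      set c : ℝ := a (τ pmin) with hcdef
      have hc0 : 0 ≤ c := ha0 _
      have claim1 : ∀ j ∈ S \ T 0, a j ≤ c := by
        intro j hj
        have hjn : j ∉ T 0 := (Finset.mem_sdiff.1 hj).2
        have hne0 : ((τ.symm j : Fin N) : ℕ) / k ≠ 0 := fun h0 => hjn ((hTmem _ _).2 h0)
        have hge : k ≤ ((τ.symm j : Fin N) : ℕ) := by
          by_contra hlt
          push_neg at hlt
          exact hne0 (Nat.div_eq_of_lt hlt)
        have hple : pmin ≤ τ.symm j := by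
          rw [Fin.le_def]
          show k - 1 ≤ ((τ.symm j : Fin N) : ℕ)
          omega
        have := hanti pmin (τ.symm j) hple
        simpa [Equiv.apply_symm_apply] using this
      have claim2 : ∀ j ∈ T 0 \ S, c ≤ a j := by
        intro j hj
        have hjm : j ∈ T 0 := (Finset.mem_sdiff.1 hj).1
        have hdiv : ((τ.symm j : Fin N) : ℕ) / k = 0 := (hTmem _ _).1 hjm
        have hlt' : ((τ.symm j : Fin N) : ℕ) < k := ((Nat.div_eq_zero_iff).1 hdiv).resolve_left (Nat.pos_iff_ne_zero.1 hk)
        have hple : τ.symm j ≤ pmin := by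
          rw [Fin.le_def]
          show ((τ.symm j : Fin N) : ℕ) ≤ k - 1
          omega
        have := hanti (τ.symm j) pmin hple
        simpa [Equiv.apply_symm_apply] using this
      have hcardT0 : (T 0).card = k := by
        refine le_antisymm (hcard 0) ?_
        have hmem : ∀ r : Fin k, τ ⟨(r : ℕ), lt_trans r.isLt hkN⟩ ∈ T 0 := by
          intro r
          refine (hTmem _ _).2 ?_
          rw [Equiv.symm_apply_apply]
          exact Nat.div_eq_of_lt r.isLt
        have hinj2 : (Finset.univ : Finset (Fin k)).card ≤ (T 0).card := by
          refine Finset.card_le_card_of_injOn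
            (fun r : Fin k => τ ⟨(r : ℕ), lt_trans r.isLt hkN⟩)
            (fun r _ => hmem r) ?_
          intro x _ y _ hxy
          have hv : ((x : ℕ) : ℕ) = (y : ℕ) := by
            simpa using congrArg Fin.val (τ.injective hxy)
          exact Fin.ext hv
        simpa using hinj2
      have hcards : (S \ T 0).card ≤ ((T 0) \ S).card := by
        have h1 := Finset.card_sdiff_add_card_inter S (T 0)
        have h2 := Finset.card_sdiff_add_card_inter (T 0) S
        have h3 : (S ∩ T 0).card = (T 0 ∩ S).card := by rw [Finset.inter_comm]
        omega
      have hb1 : (∑ j ∈ S \ T 0, a j) ≤ ((S \ T 0).card : ℝ) * c := by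
        have := Finset.sum_le_card_nsmul (S \ T 0) a c claim1
        simpa [nsmul_eq_mul] using this
      have hb2 : (((T 0) \ S).card : ℝ) * c ≤ ∑ j ∈ (T 0) \ S, a j := by
        have := Finset.card_nsmul_le_sum ((T 0) \ S) a c claim2
        simpa [nsmul_eq_mul] using this
      have hb3 : ((S \ T 0).card : ℝ) * c ≤ (((T 0) \ S).card : ℝ) * c :=
        mul_le_mul_of_nonneg_right (by exact_mod_cast hcards) hc0
      have e1 : (∑ j ∈ S ∩ T 0, a j) + (∑ j ∈ S \ T 0, a j) = ∑ j ∈ S, a j :=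
        Finset.sum_inter_add_sum_sdiff S (T 0) a
      have e2 : (∑ j ∈ T 0 ∩ S, a j) + (∑ j ∈ T 0 \ S, a j) = ∑ j ∈ T 0, a j :=
        Finset.sum_inter_add_sum_sdiff (T 0) S a
      have e3 : (∑ j ∈ S ∩ T 0, a j) = ∑ j ∈ T 0 ∩ S, a j := by
        rw [Finset.inter_comm]
      linarith
  -- final assembly
  have hfin : (∑ j ∈ T 0, a j) ≤ δ / (1 - δ) * ∑ j, a j := by
    have s1 : Real.sqrt Q0 ≤ δ / (1 - δ) * Sig := by
      rw [div_mul_eq_mul_div, le_div_iff₀ h1δ]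
      calc Real.sqrt Q0 * (1 - δ) = (1 - δ) * Real.sqrt Q0 := mul_comm _ _
        _ ≤ δ * Sig := hsqrtQ
    calc (∑ j ∈ T 0, a j) ≤ Real.sqrt k * Real.sqrt Q0 := hT0cs
      _ ≤ Real.sqrt k * (δ / (1 - δ) * Sig) :=
          mul_le_mul_of_nonneg_left s1 (Real.sqrt_nonneg _)
      _ ≤ Real.sqrt k * (δ / (1 - δ) * (Real.sqrt k / k * ∑ j, a j)) := by
          refine mul_le_mul_of_nonneg_left ?_ (Real.sqrt_nonneg _)
          exact mul_le_mul_of_nonneg_left hSigbound (div_nonneg hδ0 h1δ.le)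
      _ = Real.sqrt k * Real.sqrt k / k * (δ / (1 - δ)) * ∑ j, a j := by ring
      _ = δ / (1 - δ) * ∑ j, a j := by
          rw [Real.mul_self_sqrt hkR.le]
          field_simp
  have hratio : δ / (1 - δ) < 1 / 2 := by
    rw [div_lt_div_iff₀ h1δ (by norm_num : (0 : ℝ) < 2)]
    linarith
  calc (∑ j ∈ S, a j) ≤ ∑ j ∈ T 0, a j := hSdom
    _ ≤ δ / (1 - δ) * ∑ j, a j := hfin
    _ < 1 / 2 * ∑ j, a j := mul_lt_mul_of_pos_right hratio hsumpos
end

section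
/- Let A ∈ ℝ^{n×N}, let W_1,…,W_N be subspaces of ℝ^M, and let c = (c_1,…,c_N) be a block coefficient vector with support S = {j : c_j ≠ 0}. Suppose the submatrix A_S ∈ ℝ^{n×|S|} of A with columns indexed by S is injective, and suppose there exists a matrix H ∈ ℝ^{n×M} such that A_S^T H = sgn(U(c)_S) and ‖H^T A_{·,j}‖_2 < 1 for all j ∉ S. Then c is the unique solution of problem (P1) with data Y = A·U(c): every block vector c' ≠ c with A·U(c') = Y satisfies ‖c‖_{2,1} < ‖c'‖_{2,1}. -/
open scoped BigOperators
open Matrix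

lemma norm2_eq_zero {ι : Type*} [Fintype ι] {v : ι → ℝ} (h : norm2 v = 0) : v = 0 := by
  have hnn : 0 ≤ ∑ i, v i ^ 2 := Finset.sum_nonneg fun i _ => sq_nonneg _
  have h0 : ∑ i, v i ^ 2 = 0 := Real.sqrt_eq_zero hnn |>.mp h
  funext i
  have := (Finset.sum_eq_zero_iff_of_nonneg (fun i _ => sq_nonneg (v i))).mp h0 i (Finset.mem_univ i)
  exact pow_eq_zero_iff (n := 2) (by norm_num) |>.mp this

lemma norm2_pos {ι : Type*} [Fintype ι] {v : ι → ℝ} (h : v ≠ 0) : 0 < norm2 v :=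
  lt_of_le_of_ne (norm2_nonneg v) (fun h' => h (norm2_eq_zero h'.symm))

lemma norm2_mul_self {ι : Type*} [Fintype ι] (v : ι → ℝ) :
    norm2 v * norm2 v = ∑ i, v i ^ 2 :=
  Real.mul_self_sqrt (Finset.sum_nonneg fun i _ => sq_nonneg _)

lemma norm2_cs {ι : Type*} [Fintype ι] (a b : ι → ℝ) :
    ∑ i, a i * b i ≤ norm2 a * norm2 b :=
  Real.sum_mul_le_sqrt_mul_sqrt _ _ _

lemma norm2_mulVec {M k : ℕ} (U : Matrix (Fin M) (Fin k) ℝ) (hU : Uᵀ * U = 1)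
    (v : Fin k → ℝ) : norm2 (U.mulVec v) = norm2 v := by
  unfold norm2
  congr 1
  have h1 : ∑ i, U.mulVec v i ^ 2 = U.mulVec v ⬝ᵥ U.mulVec v := by
    simp [dotProduct, sq]
  have h2 : U.mulVec v ⬝ᵥ U.mulVec v = v ⬝ᵥ v := by
    rw [Matrix.dotProduct_mulVec, ← Matrix.mulVec_transpose, Matrix.mulVec_mulVec, hU,
      Matrix.one_mulVec]
  rw [h1, h2]
  simp [dotProduct, sq]

lemma mulVec_inj {M k : ℕ} (U : Matrix (Fin M) (Fin k) ℝ) (hU : Uᵀ * U = 1)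
    {v w : Fin k → ℝ} (h : U.mulVec v = U.mulVec w) : v = w := by
  have := congrArg (Uᵀ.mulVec) h
  rwa [Matrix.mulVec_mulVec, Matrix.mulVec_mulVec, hU, Matrix.one_mulVec,
    Matrix.one_mulVec] at this

/-- Sufficient condition for unique (P1) recovery via a dual certificate H:
if A_S is injective, A_Sᵀ H = sgn(U(c)_S) and ‖Hᵀ a_j‖₂ < 1 for j ∉ S,
then c is the unique solution of (P1) with Y = A·U(c). -/
theorem stmt8 {n N M : ℕ} {m : Fin N → ℕ}
    (A : Matrix (Fin n) (Fin N) ℝ)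
    (U : ∀ j, Matrix (Fin M) (Fin (m j)) ℝ)
    (hU : ∀ j, (U j)ᵀ * U j = 1)
    (c : ∀ j, Fin (m j) → ℝ)
    (S : Finset (Fin N)) (hS : ∀ j, j ∈ S ↔ c j ≠ 0)
    (hinj : ∀ u : Fin N → ℝ, (∀ j ∉ S, u j = 0) → A.mulVec u = 0 → u = 0)
    (H : Matrix (Fin n) (Fin M) ℝ)
    (hH1 : ∀ j ∈ S, ∀ i : Fin M, (∑ l, A l j * H l i) =
      (U j).mulVec (c j) i / norm2 ((U j).mulVec (c j)))
    (hH2 : ∀ j ∉ S, norm2 (fun i : Fin M => ∑ l, H l i * A l j) < 1) :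
    ∀ c' : (∀ j, Fin (m j) → ℝ),
      A * Ucmat U c' = A * Ucmat U c → c' ≠ c → l21 c < l21 c' := by
  intro c' hA hc'
  -- notation
  set x : ∀ j, Fin M → ℝ := fun j => (U j).mulVec (c j) with hx
  set x' : ∀ j, Fin M → ℝ := fun j => (U j).mulVec (c' j) with hx'
  set G : Fin N → Fin M → ℝ := fun j i => ∑ l, A l j * H l i with hG
  have hnorm : ∀ j, norm2 (x j) = norm2 (c j) := fun j => norm2_mulVec _ (hU j) _
  have hnorm' : ∀ j, norm2 (x' j) = norm2 (c' j) := fun j => norm2_mulVec _ (hU j) _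
  -- columns of A * (Ucmat c' - Ucmat c) vanish
  have hcol : ∀ (l : Fin n) (i : Fin M), ∑ j, A l j * (x' j i - x j i) = 0 := by
    intro l i
    have := congrFun (congrFun hA l) i
    simp only [Matrix.mul_apply, Ucmat, Matrix.of_apply] at this
    simp only [hx, hx', mul_sub, Finset.sum_sub_distrib]
    rw [this]; ring
  -- key identity
  have key : ∑ j, ∑ i, G j i * (x' j i - x j i) = 0 := by
    calc ∑ j, ∑ i, G j i * (x' j i - x j i)
        = ∑ j, ∑ i, ∑ l, H l i * (A l j * (x' j i - x j i)) := by
          refine Finset.sum_congr rfl fun j _ => Finset.sum_congr rfl fun i _ => ?_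
          simp only [hG]
          rw [Finset.sum_mul]
          exact Finset.sum_congr rfl fun l _ => by ring
      _ = ∑ j, ∑ l, ∑ i, H l i * (A l j * (x' j i - x j i)) :=
          Finset.sum_congr rfl fun j _ => Finset.sum_comm
      _ = ∑ l, ∑ j, ∑ i, H l i * (A l j * (x' j i - x j i)) := Finset.sum_comm
      _ = ∑ l, ∑ i, ∑ j, H l i * (A l j * (x' j i - x j i)) :=
          Finset.sum_congr rfl fun l _ => Finset.sum_comm
      _ = ∑ l, ∑ i, H l i * ∑ j, A l j * (x' j i - x j i) := by
          refine Finset.sum_congr rfl fun l _ => Finset.sum_congr rfl fun i _ => ?_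
          rw [Finset.mul_sum]
      _ = 0 := by simp [hcol]
  -- per-block value of ⟨G j, x j⟩
  have hGx : ∀ j, ∑ i, G j i * x j i = norm2 (c j) := by
    intro j
    by_cases hj : j ∈ S
    · have hr : norm2 (x j) ≠ 0 := by
        rw [hnorm]
        exact ne_of_gt (norm2_pos ((hS j).mp hj))
      have : ∑ i, G j i * x j i = (∑ i, x j i ^ 2) / norm2 (x j) := by
        rw [Finset.sum_div]
        refine Finset.sum_congr rfl fun i _ => ?_
        simp only [hG, hx]
        rw [hH1 j hj i]
        rw [div_mul_eq_mul_div, sq]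
      rw [this, ← norm2_mul_self (x j), mul_div_assoc, div_self hr, mul_one, hnorm]
    · have hc0 : c j = 0 := by
        by_contra h; exact hj ((hS j).mpr h)
      have : x j = 0 := by simp [hx, hc0]
      rw [this, hc0]
      simp [norm2_zero]
  -- l21 c equals ∑ ⟨G j, x' j⟩
  have heq : l21 c = ∑ j, ∑ i, G j i * x' j i := by
    have := key
    simp only [mul_sub, Finset.sum_sub_distrib] at this
    have h2 : ∑ j, ∑ i, G j i * x' j i = ∑ j, ∑ i, G j i * x j i := by linarith
    rw [h2]
    simp only [l21, hGx]
  -- per-block bound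
  have hle : ∀ j, ∑ i, G j i * x' j i ≤ norm2 (c' j) := by
    intro j
    by_cases hj : j ∈ S
    · have hr : 0 < norm2 (x j) := by
        rw [hnorm]; exact norm2_pos ((hS j).mp hj)
      have h1 : ∑ i, G j i * x' j i = (∑ i, x j i * x' j i) / norm2 (x j) := by
        rw [Finset.sum_div]
        refine Finset.sum_congr rfl fun i _ => ?_
        simp only [hG, hx]
        rw [hH1 j hj i, div_mul_eq_mul_div]
      rw [h1, div_le_iff₀ hr, ← hnorm' j]
      calc ∑ i, x j i * x' j i ≤ norm2 (x j) * norm2 (x' j) := norm2_cs _ _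
        _ = norm2 (x' j) * norm2 (x j) := mul_comm _ _
    · calc ∑ i, G j i * x' j i ≤ norm2 (G j) * norm2 (x' j) := norm2_cs _ _
        _ ≤ 1 * norm2 (x' j) := by
            refine mul_le_mul_of_nonneg_right ?_ (norm2_nonneg _)
            have := hH2 j hj
            have hGeq : G j = fun i => ∑ l, H l i * A l j := by
              funext i; exact Finset.sum_congr rfl fun l _ => mul_comm _ _
            rw [hGeq]; exact le_of_lt this
        _ = norm2 (c' j) := by rw [one_mul, hnorm']
  -- strictness
  by_cases hcase : ∃ j0, j0 ∉ S ∧ c' j0 ≠ 0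
  · obtain ⟨j0, hj0S, hj0⟩ := hcase
    have hlt : ∑ i, G j0 i * x' j0 i < norm2 (c' j0) := by
      have hpos : 0 < norm2 (x' j0) := by rw [hnorm']; exact norm2_pos hj0
      calc ∑ i, G j0 i * x' j0 i ≤ norm2 (G j0) * norm2 (x' j0) := norm2_cs _ _
        _ < 1 * norm2 (x' j0) := by
            refine mul_lt_mul_of_pos_right ?_ hpos
            have := hH2 j0 hj0S
            have hGeq : G j0 = fun i => ∑ l, H l i * A l j0 := by
              funext i; exact Finset.sum_congr rfl fun l _ => mul_comm _ _
            rw [hGeq]; exact this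
        _ = norm2 (c' j0) := by rw [one_mul, hnorm']
    rw [heq]
    exact Finset.sum_lt_sum (fun j _ => hle j) ⟨j0, Finset.mem_univ j0, hlt⟩
  · exfalso
    push_neg at hcase
    -- all off-support blocks of c' vanish, so injectivity forces c' = c
    have hD : ∀ i : Fin M, (fun j => x' j i - x j i) = 0 := by
      intro i
      refine hinj _ (fun j hj => ?_) ?_
      · have hc0 : c j = 0 := by by_contra h; exact hj ((hS j).mpr h)
        have hc'0 : c' j = 0 := hcase j hj
        simp [hx, hx', hc0, hc'0]
      · funext l
        simpa [Matrix.mulVec, dotProduct] using hcol l i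
    apply hc'
    funext j
    have : x' j = x j := by
      funext i
      have := congrFun (hD i) j
      simpa [sub_eq_zero] using this
    have := mulVec_inj (U j) (hU j) this
    funext k
    exact congrFun this k
end
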